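/- The two pure states |φ₁⟩ = cos θ|00⟩ + sin θ|11⟩ and |φ₂⟩ = sin θ|00⟩ + cos θ|11⟩ both achieve their maximal CHSH value on the operator S_{θ+} = (2/√(1+sin²2θ))(sin 2θ · σ_x⊗σ_x + σ_z⊗σ_z); that is, tr(|φ_i⟩⟨φ_i| S_{θ+}) = 2√(1+sin²2θ) for i = 1, 2. -/

import Mathlib

open Matrix Complex
open scoped Kronecker ComplexConjugate

/-- The Pauli `X` matrix. -/
noncomputable def pauliX : Matrix (Fin 2) (Fin 2) ℂ := !![0, 1; 1, 0]

/-- The Pauli `Z` matrix. -/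
noncomputable def pauliZ : Matrix (Fin 2) (Fin 2) ℂ := !![1, 0; 0, -1]

/-- The two states `|φ₁⟩ = cos θ|00⟩ + sin θ|11⟩` and
`|φ₂⟩ = sin θ|00⟩ + cos θ|11⟩` both attain the value `2√(1+sin²2θ)` on the single CHSH
operator `S_{θ+} = (2/√(1+sin²2θ))(sin 2θ · σ_x⊗σ_x + σ_z⊗σ_z)`. -/
theorem stmt14 (θ : ℝ) (hθ : θ ∈ Set.Ico 0 Real.pi)
    (φ₁ φ₂ : Fin 2 × Fin 2 → ℂ)
    (hφ₁ : φ₁ = fun p => if p = (0, 0) then (Real.cos θ : ℂ)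
      else if p = (1, 1) then (Real.sin θ : ℂ) else 0)
    (hφ₂ : φ₂ = fun p => if p = (0, 0) then (Real.sin θ : ℂ)
      else if p = (1, 1) then (Real.cos θ : ℂ) else 0)
    (S : Matrix (Fin 2 × Fin 2) (Fin 2 × Fin 2) ℂ)
    (hS : S = ((2 / Real.sqrt (1 + Real.sin (2 * θ) ^ 2) : ℝ) : ℂ) •
      (((Real.sin (2 * θ) : ℝ) : ℂ) • (pauliX ⊗ₖ pauliX) + pauliZ ⊗ₖ pauliZ)) :
    (∑ p, conj (φ₁ p) * (S.mulVec φ₁) p) = (2 * Real.sqrt (1 + Real.sin (2 * θ) ^ 2) : ℝ) ∧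
    (∑ p, conj (φ₂ p) * (S.mulVec φ₂) p) = (2 * Real.sqrt (1 + Real.sin (2 * θ) ^ 2) : ℝ) := by
  subst hφ₁ hφ₂ hS
  have hr : Real.sqrt (1 + Real.sin (2 * θ) ^ 2) > 0 := Real.sqrt_pos.mpr (by positivity)
  have hr2 : Real.sqrt (1 + Real.sin (2 * θ) ^ 2) ^ 2 = 1 + Real.sin (2 * θ) ^ 2 :=
    Real.sq_sqrt (by positivity)
  have h3 : Real.sin (2*θ) = 2*Real.sin θ*Real.cos θ := Real.sin_two_mul θ
  have hA : Real.sqrt (1 + (2*Real.sin θ*Real.cos θ) ^ 2) ^ 2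
      = 1 + (2*Real.sin θ*Real.cos θ) ^ 2 := Real.sq_sqrt (by positivity)
  constructor
  · simp only [Fintype.sum_prod_type, Fin.sum_univ_two, mulVec, dotProduct,
      kroneckerMap_apply, pauliX, pauliZ, Matrix.smul_apply, Matrix.add_apply,
      Matrix.cons_val', Matrix.cons_val_zero, Matrix.cons_val_one, Matrix.head_cons,
      Matrix.head_fin_const, Matrix.empty_val', Matrix.cons_val_fin_one]
    norm_num [← Complex.ofReal_cos, ← Complex.ofReal_sin, Complex.conj_ofReal]
    norm_cast
    field_simp
    rw [h3]
    have hB : Real.sqrt (1 + (2*Real.sin θ*Real.cos θ) ^ 2) ≠ 0 := by positivity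
    rw [div_eq_iff (by exact_mod_cast hB)]
    norm_cast
    linear_combination (-1) * hA + Real.sin_sq_add_cos_sq θ
  · simp only [Fintype.sum_prod_type, Fin.sum_univ_two, mulVec, dotProduct,
      kroneckerMap_apply, pauliX, pauliZ, Matrix.smul_apply, Matrix.add_apply,
      Matrix.cons_val', Matrix.cons_val_zero, Matrix.cons_val_one, Matrix.head_cons,
      Matrix.head_fin_const, Matrix.empty_val', Matrix.cons_val_fin_one]
    norm_num [← Complex.ofReal_cos, ← Complex.ofReal_sin, Complex.conj_ofReal]
    norm_cast
    field_simp
    rw [h3]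
    have hB : Real.sqrt (1 + (2*Real.sin θ*Real.cos θ) ^ 2) ≠ 0 := by positivity
    rw [div_eq_iff (by exact_mod_cast hB)]
    norm_cast
    linear_combination (-1) * hA + Real.sin_sq_add_cos_sq θ
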